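/- Discrete entropy / Fisher information estimate (single time step): let (c, μ) be a solution of the one-step scheme with c_{i,K} > 0 for every K ∈ V and i ∈ {1,2}, and set L_K := (1/m_K) Σ_{L : {K,L} ∈ E} τ_{KL} (c_{1,K} − c_{1,L}) for K ∈ V. Then Σ_{i=1,2} η_i Σ_{K ∈ V} m_K ( H(c_{i,K}) − H(c⁰_{i,K}) ) + Δt (α/2) Σ_{K ∈ V} m_K L_K² + Δt Σ_{i=1,2} η_i θ_i Σ_{{K,L} ∈ E} τ_{KL} (c_{i,K} − c_{i,L})(log c_{i,K} − log c_{i,L}) ≤ Δt (κ²/(2α)) Σ_{K ∈ V} m_K + Δt ( Σ_{{K,L} ∈ E} τ_{KL} (c_{1,K} − c_{1,L})² )^{1/2} · Σ_{i=1,2} ( Σ_{{K,L} ∈ E} τ_{KL} (Ψ_{i,K} − Ψ_{i,L})² )^{1/2}. -/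

import Mathlib

open Finset

/-- Logarithmic-mean edge value: `lm a b = a` if `a = b ≥ 0`, `0` if `min a b ≤ 0`,
and `(a - b)/(log a - log b)` otherwise. -/
noncomputable def lm (a b : ℝ) : ℝ :=
  if a = b ∧ 0 ≤ a then a
  else if min a b ≤ 0 then 0
  else (a - b) / (Real.log a - Real.log b)

/-- Entropy function `H(c) = c log c - c + 1` (note `H 0 = 1` since `Real.log 0 = 0`). -/
noncomputable def ent (c : ℝ) : ℝ := c * Real.log c - c + 1

/-- Sum of `f L` over the neighbours `L` of `K`, i.e. over the `L` with `(K, L) ∈ E`. -/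
noncomputable def nbrSum {V : Type*} [Fintype V] [DecidableEq V]
    (E : Finset (V × V)) (K : V) (f : V → ℝ) : ℝ :=
  ∑ L ∈ Finset.univ.filter (fun L => (K, L) ∈ E), f L

/-- Sum of a symmetric quantity `f K L` over the unordered edges `{K, L}`, where the
edge set `E` is recorded as a symmetric finset of ordered pairs: each unordered edge
appears as both `(K, L)` and `(L, K)`, whence the division by `2`. -/
noncomputable def edgeSum {V : Type*} (E : Finset (V × V)) (f : V → V → ℝ) : ℝ :=
  (∑ p ∈ E, f p.1 p.2) / 2

/-- The one-step finite-volume scheme: equations (i) for both phases, (ii), (iii), (iv). -/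
def OneStepScheme {V : Type*} [Fintype V] [DecidableEq V]
    (E : Finset (V × V)) (m : V → ℝ) (τ : V → V → ℝ)
    (Δt α κ η₁ η₂ θ₁ θ₂ : ℝ) (Ψ₁ Ψ₂ : V → ℝ)
    (c₁₀ c₂₀ c₁ c₂ μ₁ μ₂ : V → ℝ) : Prop :=
  (∀ K : V,
    m K * (c₁ K - c₁₀ K) / Δt
      + nbrSum E K (fun L =>
          τ K L * (lm (c₁ K) (c₁ L) / η₁ * (μ₁ K + Ψ₁ K - μ₁ L - Ψ₁ L)
            + θ₁ * (c₁ K - c₁ L))) = 0) ∧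
  (∀ K : V,
    m K * (c₂ K - c₂₀ K) / Δt
      + nbrSum E K (fun L =>
          τ K L * (lm (c₂ K) (c₂ L) / η₂ * (μ₂ K + Ψ₂ K - μ₂ L - Ψ₂ L)
            + θ₂ * (c₂ K - c₂ L))) = 0) ∧
  (∀ K : V,
    μ₁ K - μ₂ K
      = α / m K * nbrSum E K (fun L => τ K L * (c₁ K - c₁ L))
        + κ * (1 - 2 * c₁₀ K)) ∧
  (∀ K : V, c₁ K + c₂ K = 1) ∧
  (∑ K : V, m K * (c₁ K * μ₁ K + c₂ K * μ₂ K) = 0)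

/-- The discrete energy `𝔈(c)`. -/
noncomputable def discreteEnergy {V : Type*} [Fintype V]
    (E : Finset (V × V)) (m : V → ℝ) (τ : V → V → ℝ)
    (α κ η₁ η₂ θ₁ θ₂ : ℝ) (Ψ₁ Ψ₂ : V → ℝ) (c₁ c₂ : V → ℝ) : ℝ :=
  α / 2 * edgeSum E (fun K L => τ K L * (c₁ K - c₁ L) ^ 2)
    + ∑ K : V, m K * (κ * c₁ K * c₂ K
        + (c₁ K * Ψ₁ K + θ₁ * η₁ * ent (c₁ K))
        + (c₂ K * Ψ₂ K + θ₂ * η₂ * ent (c₂ K)))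

/-- The discrete dissipation `𝔇(c, μ)`. -/
noncomputable def discreteDissipation {V : Type*}
    (E : Finset (V × V)) (τ : V → V → ℝ)
    (η₁ η₂ θ₁ θ₂ : ℝ) (Ψ₁ Ψ₂ : V → ℝ) (c₁ c₂ μ₁ μ₂ : V → ℝ) : ℝ :=
  edgeSum E (fun K L => τ K L * (lm (c₁ K) (c₁ L) / η₁)
      * (μ₁ K + Ψ₁ K + θ₁ * η₁ * Real.log (c₁ K)
          - μ₁ L - Ψ₁ L - θ₁ * η₁ * Real.log (c₁ L)) ^ 2)
  + edgeSum E (fun K L => τ K L * (lm (c₂ K) (c₂ L) / η₂)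
      * (μ₂ K + Ψ₂ K + θ₂ * η₂ * Real.log (c₂ K)
          - μ₂ L - Ψ₂ L - θ₂ * η₂ * Real.log (c₂ L)) ^ 2)

lemma ent_convex {c c0 : ℝ} (hc : 0 < c) (hc0 : 0 ≤ c0) :
    ent c - ent c0 ≤ Real.log c * (c - c0) := by
  unfold ent
  rcases eq_or_lt_of_le hc0 with h | h
  · subst h
    simp only [Real.log_zero, mul_zero, zero_mul, sub_zero, zero_sub, zero_add, mul_zero]
    nlinarith [Real.add_one_le_exp (Real.log c), Real.exp_log hc]
  · have key := Real.log_le_sub_one_of_pos (div_pos hc h)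
    rw [Real.log_div hc.ne' h.ne'] at key
    have h2 : c0 * (Real.log c - Real.log c0) ≤ c0 * (c / c0 - 1) :=
      mul_le_mul_of_nonneg_left key h.le
    have h3 : c0 * (c / c0 - 1) = c - c0 := by field_simp
    nlinarith [h2, h3]

lemma lm_comm (a b : ℝ) : lm a b = lm b a := by
  unfold lm
  by_cases hab : a = b
  · simp [hab]
  · have hba : ¬ b = a := fun h => hab h.symm
    by_cases hmin : min a b ≤ 0
    · rw [if_neg (fun h => hab h.1), if_pos hmin, if_neg (fun h => hba h.1),
        if_pos (by rwa [min_comm])]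
    · rw [if_neg (fun h => hab h.1), if_neg hmin, if_neg (fun h => hba h.1),
        if_neg (by rwa [min_comm]), ← neg_sub a b, ← neg_sub (Real.log a), neg_div_neg_eq]

lemma lm_mul_log {a b : ℝ} (ha : 0 < a) (hb : 0 < b) :
    lm a b * (Real.log a - Real.log b) = a - b := by
  unfold lm
  by_cases hab : a = b
  · simp [hab]
  · have hlog : Real.log a ≠ Real.log b := fun h => hab (by
      rw [← Real.exp_log ha, ← Real.exp_log hb, h])
    rw [if_neg (fun h => hab h.1), if_neg (not_le.mpr (lt_min ha hb))]
    exact div_mul_cancel₀ _ (sub_ne_zero.mpr hlog)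

lemma nbrSum_const_mul {V : Type*} [Fintype V] [DecidableEq V]
    (E : Finset (V × V)) (K : V) (a : ℝ) (f : V → ℝ) :
    nbrSum E K (fun L => a * f L) = a * nbrSum E K f := by
  unfold nbrSum; rw [Finset.mul_sum]

lemma sum_nbrSum {V : Type*} [Fintype V] [DecidableEq V]
    (E : Finset (V × V)) (F : V → V → ℝ) :
    ∑ K, nbrSum E K (fun L => F K L) = ∑ p ∈ E, F p.1 p.2 := by
  unfold nbrSum
  simp_rw [Finset.sum_filter]
  rw [← Finset.sum_product']
  have : ∀ p : V × V, (if (p.1, p.2) ∈ E then F p.1 p.2 else 0)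
      = if p ∈ E then F p.1 p.2 else 0 := fun p => by rw [Prod.mk.eta]
  rw [Finset.sum_congr rfl (fun p _ => this p), Finset.sum_ite_mem,
    Finset.inter_eq_right.mpr (fun p _ => by simp)]

lemma sum_swap_E {V : Type*} (E : Finset (V × V))
    (hEsym : ∀ K L : V, (K, L) ∈ E ↔ (L, K) ∈ E) (F : V → V → ℝ) :
    ∑ p ∈ E, F p.1 p.2 = ∑ p ∈ E, F p.2 p.1 := by
  apply Finset.sum_nbij' (fun p => Prod.swap p) (fun p => Prod.swap p)
  · intro p hp; exact (hEsym p.1 p.2).mp hp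
  · intro p hp; exact (hEsym p.2 p.1).mpr hp
  · intro p _; simp
  · intro p _; simp
  · intro p _; simp

lemma sum_to_edgeSum {V : Type*} (E : Finset (V × V))
    (hEsym : ∀ K L : V, (K, L) ∈ E ↔ (L, K) ∈ E)
    (g : V → ℝ) (a : V → V → ℝ)
    (ha : ∀ K L, (K, L) ∈ E → a K L = - a L K) :
    ∑ p ∈ E, g p.1 * a p.1 p.2 = edgeSum E (fun K L => (g K - g L) * a K L) := by
  unfold edgeSum
  have h2 : ∑ p ∈ E, g p.2 * a p.1 p.2 = - ∑ p ∈ E, g p.1 * a p.1 p.2 := by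
    rw [sum_swap_E E hEsym (fun K L => g L * a K L), ← Finset.sum_neg_distrib]
    exact Finset.sum_congr rfl (fun p hp => by rw [ha p.2 p.1 ((hEsym p.1 p.2).mp hp)]; ring)
  have h3 : ∑ p ∈ E, (g p.1 - g p.2) * a p.1 p.2
      = ∑ p ∈ E, g p.1 * a p.1 p.2 - ∑ p ∈ E, g p.2 * a p.1 p.2 := by
    rw [← Finset.sum_sub_distrib]; exact Finset.sum_congr rfl (fun p _ => by ring)
  rw [h3, h2]; ring

lemma edge_cs {V : Type*} (E : Finset (V × V)) (w x y : V → V → ℝ)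
    (hw : ∀ p ∈ E, 0 ≤ w p.1 p.2) :
    ∑ p ∈ E, w p.1 p.2 * (x p.1 p.2 * y p.1 p.2)
      ≤ Real.sqrt (∑ p ∈ E, w p.1 p.2 * x p.1 p.2 ^ 2)
        * Real.sqrt (∑ p ∈ E, w p.1 p.2 * y p.1 p.2 ^ 2) := by
  set f : V × V → ℝ := fun p => Real.sqrt (w p.1 p.2) * x p.1 p.2
  set g : V × V → ℝ := fun p => Real.sqrt (w p.1 p.2) * y p.1 p.2
  have hfg : ∀ p ∈ E, w p.1 p.2 * (x p.1 p.2 * y p.1 p.2) = f p * g p := by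
    intro p hp
    simp only [f, g]
    rw [show Real.sqrt (w p.1 p.2) * x p.1 p.2 * (Real.sqrt (w p.1 p.2) * y p.1 p.2)
      = (Real.sqrt (w p.1 p.2) * Real.sqrt (w p.1 p.2)) * (x p.1 p.2 * y p.1 p.2) by ring,
      Real.mul_self_sqrt (hw p hp)]
  have hf2 : ∀ p ∈ E, w p.1 p.2 * x p.1 p.2 ^ 2 = f p ^ 2 := by
    intro p hp; simp only [f, mul_pow, Real.sq_sqrt (hw p hp)]
  have hg2 : ∀ p ∈ E, w p.1 p.2 * y p.1 p.2 ^ 2 = g p ^ 2 := by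
    intro p hp; simp only [g, mul_pow, Real.sq_sqrt (hw p hp)]
  rw [Finset.sum_congr rfl hfg, Finset.sum_congr rfl hf2, Finset.sum_congr rfl hg2]
  exact Real.sum_mul_le_sqrt_mul_sqrt E f g

lemma phase_estimate {V : Type*} [Fintype V] [DecidableEq V]
    (E : Finset (V × V)) (m : V → ℝ) (τ : V → V → ℝ)
    (Δt η θ : ℝ) (Ψ c0 c μ : V → ℝ)
    (hEsym : ∀ K L : V, (K, L) ∈ E ↔ (L, K) ∈ E)
    (hm : ∀ K, 0 < m K) (hτsym : ∀ K L, τ K L = τ L K)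
    (hΔt : 0 < Δt) (hη : 0 < η)
    (hc0 : ∀ K, 0 ≤ c0 K) (hc : ∀ K, 0 < c K)
    (hscheme : ∀ K, m K * (c K - c0 K) / Δt
      + nbrSum E K (fun L => τ K L * (lm (c K) (c L) / η * (μ K + Ψ K - μ L - Ψ L)
          + θ * (c K - c L))) = 0) :
    η * (∑ K, m K * (ent (c K) - ent (c0 K)))
      ≤ - Δt * edgeSum E (fun K L => τ K L * ((c K - c L) * (μ K - μ L)))
        - Δt * edgeSum E (fun K L => τ K L * ((c K - c L) * (Ψ K - Ψ L)))
        - Δt * (η * θ) * edgeSum E (fun K L =>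
            τ K L * (c K - c L) * (Real.log (c K) - Real.log (c L))) := by
  set f : V → V → ℝ := fun K L =>
    τ K L * (lm (c K) (c L) / η * (μ K + Ψ K - μ L - Ψ L) + θ * (c K - c L)) with hf
  have hη' : η ≠ 0 := hη.ne'
  have step1 : ∑ K, m K * (ent (c K) - ent (c0 K))
      ≤ ∑ K, Real.log (c K) * (m K * (c K - c0 K)) := by
    apply Finset.sum_le_sum
    intro K _
    calc m K * (ent (c K) - ent (c0 K))
        ≤ m K * (Real.log (c K) * (c K - c0 K)) :=
          mul_le_mul_of_nonneg_left (ent_convex (hc K) (hc0 K)) (hm K).le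
      _ = Real.log (c K) * (m K * (c K - c0 K)) := by ring
  have step2 : ∀ K, m K * (c K - c0 K) = -Δt * nbrSum E K (fun L => f K L) := by
    intro K
    have h := hscheme K
    have h2 : m K * (c K - c0 K) / Δt = - nbrSum E K (fun L => f K L) := by linarith
    rw [div_eq_iff hΔt.ne'] at h2
    linarith
  have step3 : ∑ K, Real.log (c K) * (m K * (c K - c0 K))
      = -Δt * ∑ p ∈ E, Real.log (c p.1) * f p.1 p.2 := by
    rw [← sum_nbrSum E (fun K L => Real.log (c K) * f K L), Finset.mul_sum]
    apply Finset.sum_congr rfl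
    intro K _
    rw [step2 K, nbrSum_const_mul]
    ring
  have hanti : ∀ K L, (K, L) ∈ E → f K L = - f L K := by
    intro K L _
    simp only [hf]
    rw [hτsym K L, lm_comm (c K) (c L)]
    ring
  have step4 : ∑ p ∈ E, Real.log (c p.1) * f p.1 p.2
      = edgeSum E (fun K L => (Real.log (c K) - Real.log (c L)) * f K L) :=
    sum_to_edgeSum E hEsym (fun K => Real.log (c K)) f hanti
  have hpt : ∀ K L : V, η * ((Real.log (c K) - Real.log (c L)) * f K L)
      = τ K L * ((c K - c L) * (μ K - μ L)) + τ K L * ((c K - c L) * (Ψ K - Ψ L))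
        + (η * θ) * (τ K L * (c K - c L) * (Real.log (c K) - Real.log (c L))) := by
    intro K L
    have key := lm_mul_log (hc K) (hc L)
    simp only [hf]
    field_simp
    linear_combination (τ K L * (μ K + Ψ K - μ L - Ψ L)) * key
  have step5 : η * edgeSum E (fun K L => (Real.log (c K) - Real.log (c L)) * f K L)
      = edgeSum E (fun K L => τ K L * ((c K - c L) * (μ K - μ L)))
        + edgeSum E (fun K L => τ K L * ((c K - c L) * (Ψ K - Ψ L)))
        + (η * θ) * edgeSum E (fun K L =>
            τ K L * (c K - c L) * (Real.log (c K) - Real.log (c L))) := by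
    have h1 : ∑ p ∈ E, η * ((Real.log (c p.1) - Real.log (c p.2)) * f p.1 p.2)
        = ∑ p ∈ E, (τ p.1 p.2 * ((c p.1 - c p.2) * (μ p.1 - μ p.2))
          + (τ p.1 p.2 * ((c p.1 - c p.2) * (Ψ p.1 - Ψ p.2))
          + (η * θ) * (τ p.1 p.2 * (c p.1 - c p.2) * (Real.log (c p.1) - Real.log (c p.2))))) :=
      Finset.sum_congr rfl (fun p _ => by rw [hpt p.1 p.2]; ring)
    rw [← Finset.mul_sum, Finset.sum_add_distrib, Finset.sum_add_distrib, ← Finset.mul_sum] at h1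
    unfold edgeSum
    linarith
  have main : η * ∑ K, Real.log (c K) * (m K * (c K - c0 K))
      = - Δt * edgeSum E (fun K L => τ K L * ((c K - c L) * (μ K - μ L)))
        - Δt * edgeSum E (fun K L => τ K L * ((c K - c L) * (Ψ K - Ψ L)))
        - Δt * (η * θ) * edgeSum E (fun K L =>
            τ K L * (c K - c L) * (Real.log (c K) - Real.log (c L))) := by
    rw [step3, step4]
    nlinarith [step5]
  calc η * (∑ K, m K * (ent (c K) - ent (c0 K)))
      ≤ η * ∑ K, Real.log (c K) * (m K * (c K - c0 K)) :=
        mul_le_mul_of_nonneg_left step1 hη.le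
    _ = _ := main

lemma sqrt_half_mul (X Y : ℝ) (hX : 0 ≤ X) (hY : 0 ≤ Y) :
    Real.sqrt X * Real.sqrt Y / 2 = Real.sqrt (X / 2) * Real.sqrt (Y / 2) := by
  rw [← Real.sqrt_mul hX Y, ← Real.sqrt_mul (div_nonneg hX two_pos.le) (Y / 2),
    show X / 2 * (Y / 2) = X * Y * (1 / 2) ^ 2 by ring,
    Real.sqrt_mul (mul_nonneg hX hY), Real.sqrt_sq (by norm_num : (0:ℝ) ≤ 1/2)]
  ring

/-- Discrete entropy / Fisher information estimate (single time step). -/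
theorem entropy_fisher_estimate_one_step
    {V : Type*} [Fintype V] [DecidableEq V] [Nonempty V]
    (E : Finset (V × V)) (m : V → ℝ) (τ : V → V → ℝ)
    (Δt α κ η₁ η₂ θ₁ θ₂ : ℝ) (Ψ₁ Ψ₂ : V → ℝ)
    (c₁₀ c₂₀ c₁ c₂ μ₁ μ₂ : V → ℝ)
    (hEirr : ∀ K : V, (K, K) ∉ E)
    (hEsym : ∀ K L : V, (K, L) ∈ E ↔ (L, K) ∈ E)
    (hconn : (SimpleGraph.fromRel (fun K L : V => (K, L) ∈ E)).Connected)
    (hm : ∀ K, 0 < m K)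
    (hτpos : ∀ K L, (K, L) ∈ E → 0 < τ K L)
    (hτsym : ∀ K L, τ K L = τ L K)
    (hΔt : 0 < Δt) (hα : 0 < α) (hκ : 0 < κ)
    (hη₁ : 0 < η₁) (hη₂ : 0 < η₂) (hθ₁ : 0 < θ₁) (hθ₂ : 0 < θ₂)
    (hc₁₀ : ∀ K, c₁₀ K ∈ Set.Icc (0:ℝ) 1)
    (hc₂₀ : ∀ K, c₂₀ K ∈ Set.Icc (0:ℝ) 1)
    (hc₀sum : ∀ K, c₁₀ K + c₂₀ K = 1)
    (hsol : OneStepScheme E m τ Δt α κ η₁ η₂ θ₁ θ₂ Ψ₁ Ψ₂ c₁₀ c₂₀ c₁ c₂ μ₁ μ₂)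
    (hpos : ∀ K : V, 0 < c₁ K ∧ 0 < c₂ K) :
    η₁ * (∑ K : V, m K * (ent (c₁ K) - ent (c₁₀ K)))
      + η₂ * (∑ K : V, m K * (ent (c₂ K) - ent (c₂₀ K)))
      + Δt * (α / 2) * ∑ K : V, m K
          * ((1 / m K) * nbrSum E K (fun L => τ K L * (c₁ K - c₁ L))) ^ 2
      + Δt * (η₁ * θ₁ * edgeSum E (fun K L =>
            τ K L * (c₁ K - c₁ L) * (Real.log (c₁ K) - Real.log (c₁ L)))
          + η₂ * θ₂ * edgeSum E (fun K L =>
            τ K L * (c₂ K - c₂ L) * (Real.log (c₂ K) - Real.log (c₂ L))))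
    ≤ Δt * (κ ^ 2 / (2 * α)) * (∑ K : V, m K)
      + Δt * Real.sqrt (edgeSum E (fun K L => τ K L * (c₁ K - c₁ L) ^ 2))
          * (Real.sqrt (edgeSum E (fun K L => τ K L * (Ψ₁ K - Ψ₁ L) ^ 2))
            + Real.sqrt (edgeSum E (fun K L => τ K L * (Ψ₂ K - Ψ₂ L) ^ 2))) := by
  obtain ⟨hs1, hs2, hmu, hcsum, -⟩ := hsol
  have P1 := phase_estimate E m τ Δt η₁ θ₁ Ψ₁ c₁₀ c₁ μ₁ hEsym hm hτsym hΔt hη₁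
    (fun K => (hc₁₀ K).1) (fun K => (hpos K).1) hs1
  have P2 := phase_estimate E m τ Δt η₂ θ₂ Ψ₂ c₂₀ c₂ μ₂ hEsym hm hτsym hΔt hη₂
    (fun K => (hc₂₀ K).1) (fun K => (hpos K).2) hs2
  have hdc : ∀ K L : V, c₂ K - c₂ L = -(c₁ K - c₁ L) := by
    intro K L; have h1 := hcsum K; have h2 := hcsum L; linarith
  have hwnn : ∀ p ∈ E, 0 ≤ τ p.1 p.2 := fun p hp => (hτpos p.1 p.2 hp).le
  -- F3 : the chemical-potential part equals the sum over cells
  have unsym : ∑ K, (μ₁ K - μ₂ K) * nbrSum E K (fun L => τ K L * (c₁ K - c₁ L))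
      = edgeSum E (fun K L =>
          ((μ₁ K - μ₂ K) - (μ₁ L - μ₂ L)) * (τ K L * (c₁ K - c₁ L))) := by
    have h1 : ∑ K, (μ₁ K - μ₂ K) * nbrSum E K (fun L => τ K L * (c₁ K - c₁ L))
        = ∑ p ∈ E, (μ₁ p.1 - μ₂ p.1) * (τ p.1 p.2 * (c₁ p.1 - c₁ p.2)) := by
      rw [← sum_nbrSum E (fun K L => (μ₁ K - μ₂ K) * (τ K L * (c₁ K - c₁ L)))]
      exact Finset.sum_congr rfl (fun K _ => (nbrSum_const_mul E K _ _).symm)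
    rw [h1]
    exact sum_to_edgeSum E hEsym (fun K => μ₁ K - μ₂ K)
      (fun K L => τ K L * (c₁ K - c₁ L)) (fun K L _ => by rw [hτsym K L]; ring)
  have F3 : edgeSum E (fun K L => τ K L * ((c₁ K - c₁ L) * (μ₁ K - μ₁ L)))
      + edgeSum E (fun K L => τ K L * ((c₂ K - c₂ L) * (μ₂ K - μ₂ L)))
      = ∑ K, (μ₁ K - μ₂ K) * nbrSum E K (fun L => τ K L * (c₁ K - c₁ L)) := by
    rw [unsym]
    unfold edgeSum
    rw [← add_div]
    congr 1
    rw [← Finset.sum_add_distrib]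
    exact Finset.sum_congr rfl (fun p _ => by dsimp only; rw [hdc p.1 p.2]; ring)
  -- F4 : Young inequality cell by cell
  have F4 : (α / 2) * ∑ K, m K * ((1 / m K) * nbrSum E K (fun L => τ K L * (c₁ K - c₁ L))) ^ 2
      - ∑ K, (μ₁ K - μ₂ K) * nbrSum E K (fun L => τ K L * (c₁ K - c₁ L))
      ≤ κ ^ 2 / (2 * α) * ∑ K, m K := by
    rw [Finset.mul_sum, Finset.mul_sum, ← Finset.sum_sub_distrib]
    apply Finset.sum_le_sum
    intro K _
    have hM := hm K
    have hu : (1 - 2 * c₁₀ K) ^ 2 ≤ 1 := by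
      have h1 := (hc₁₀ K).1; have h2 := (hc₁₀ K).2; nlinarith
    rw [hmu K]
    set n := nbrSum E K (fun L => τ K L * (c₁ K - c₁ L)) with hn
    set u := 1 - 2 * c₁₀ K with huu
    have expand : α / 2 * (m K * ((1 / m K) * n) ^ 2) - (α / m K * n + κ * u) * n
        = -(α / (2 * m K)) * n ^ 2 - κ * u * n := by
      field_simp
      ring
    rw [expand, ← sub_nonneg]
    have id2 : κ ^ 2 / (2 * α) * m K - (-(α / (2 * m K)) * n ^ 2 - κ * u * n)
        = ((α * n + κ * u * m K) ^ 2 + κ ^ 2 * m K ^ 2 * (1 - u ^ 2)) / (2 * α * m K) := by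
      field_simp
      ring
    rw [id2]
    apply div_nonneg
    · have h9 : 0 ≤ κ ^ 2 * m K ^ 2 * (1 - u ^ 2) :=
        mul_nonneg (by positivity) (by linarith)
      nlinarith [sq_nonneg (α * n + κ * u * m K)]
    · positivity
  -- Cauchy-Schwarz facts at the edgeSum level
  have hXnn : 0 ≤ ∑ p ∈ E, τ p.1 p.2 * (c₁ p.1 - c₁ p.2) ^ 2 :=
    Finset.sum_nonneg fun p hp => mul_nonneg (hwnn p hp) (sq_nonneg _)
  have hB1nn : 0 ≤ ∑ p ∈ E, τ p.1 p.2 * (Ψ₁ p.1 - Ψ₁ p.2) ^ 2 :=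
    Finset.sum_nonneg fun p hp => mul_nonneg (hwnn p hp) (sq_nonneg _)
  have hB2nn : 0 ≤ ∑ p ∈ E, τ p.1 p.2 * (Ψ₂ p.1 - Ψ₂ p.2) ^ 2 :=
    Finset.sum_nonneg fun p hp => mul_nonneg (hwnn p hp) (sq_nonneg _)
  have CS1 : - edgeSum E (fun K L => τ K L * ((c₁ K - c₁ L) * (Ψ₁ K - Ψ₁ L)))
      ≤ Real.sqrt (edgeSum E (fun K L => τ K L * (c₁ K - c₁ L) ^ 2))
        * Real.sqrt (edgeSum E (fun K L => τ K L * (Ψ₁ K - Ψ₁ L) ^ 2)) := by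
    have h := edge_cs E τ (fun K L => c₁ L - c₁ K) (fun K L => Ψ₁ K - Ψ₁ L) hwnn
    have e1 : ∑ p ∈ E, τ p.1 p.2 * ((c₁ p.2 - c₁ p.1) * (Ψ₁ p.1 - Ψ₁ p.2))
        = - ∑ p ∈ E, τ p.1 p.2 * ((c₁ p.1 - c₁ p.2) * (Ψ₁ p.1 - Ψ₁ p.2)) := by
      rw [← Finset.sum_neg_distrib]
      exact Finset.sum_congr rfl fun p _ => by ring
    have e2 : ∑ p ∈ E, τ p.1 p.2 * (c₁ p.2 - c₁ p.1) ^ 2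
        = ∑ p ∈ E, τ p.1 p.2 * (c₁ p.1 - c₁ p.2) ^ 2 :=
      Finset.sum_congr rfl fun p _ => by ring
    rw [e1, e2] at h
    unfold edgeSum
    rw [← sqrt_half_mul _ _ hXnn hB1nn]
    linarith
  have CS2 : - edgeSum E (fun K L => τ K L * ((c₂ K - c₂ L) * (Ψ₂ K - Ψ₂ L)))
      ≤ Real.sqrt (edgeSum E (fun K L => τ K L * (c₁ K - c₁ L) ^ 2))
        * Real.sqrt (edgeSum E (fun K L => τ K L * (Ψ₂ K - Ψ₂ L) ^ 2)) := by
    have h := edge_cs E τ (fun K L => c₁ K - c₁ L) (fun K L => Ψ₂ K - Ψ₂ L) hwnn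
    have e1 : ∑ p ∈ E, τ p.1 p.2 * ((c₂ p.1 - c₂ p.2) * (Ψ₂ p.1 - Ψ₂ p.2))
        = - ∑ p ∈ E, τ p.1 p.2 * ((c₁ p.1 - c₁ p.2) * (Ψ₂ p.1 - Ψ₂ p.2)) := by
      rw [← Finset.sum_neg_distrib]
      exact Finset.sum_congr rfl fun p _ => by rw [hdc p.1 p.2]; ring
    unfold edgeSum
    rw [← sqrt_half_mul _ _ hXnn hB2nn, e1]
    linarith
  -- multiply by Δt and combine
  have F3Δ : Δt * (edgeSum E (fun K L => τ K L * ((c₁ K - c₁ L) * (μ₁ K - μ₁ L)))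
        + edgeSum E (fun K L => τ K L * ((c₂ K - c₂ L) * (μ₂ K - μ₂ L))))
      = Δt * ∑ K, (μ₁ K - μ₂ K) * nbrSum E K (fun L => τ K L * (c₁ K - c₁ L)) := by
    rw [F3]
  have F4Δ := mul_le_mul_of_nonneg_left F4 hΔt.le
  have CS1Δ := mul_le_mul_of_nonneg_left CS1 hΔt.le
  have CS2Δ := mul_le_mul_of_nonneg_left CS2 hΔt.le
  nlinarith [P1, P2, F3Δ, F4Δ, CS1Δ, CS2Δ]
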